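/- (Converse of Lemma 3.1.) Let I be an ideal of ℝ[x] = MvPolynomial (Fin n) ℝ, p ∈ ℝ[x], z : Fin d → ℝ[x], let M₁ ∈ ℝ^{d×d} be symmetric positive definite with M₁ a Gram matrix for 1 with respect to z mod I, and let M₂ ∈ ℝ^{d×d} be symmetric with M₂ a Gram matrix for p with respect to z mod I. Define z̃ : Fin d → ℝ[x] by z̃ᵢ := Σⱼ (√M₁) i j · z j, where √M₁ is the positive semidefinite square root of M₁. Then z̃₁,…,z̃_d are I-spherical (that is, Σᵢ z̃ᵢ² − 1 ∈ I), and the residue class of p in ℝ[x]/I belongs to the ℝ-subalgebra of ℝ[x]/I generated by the residue classes of z̃₁,…,z̃_d. -/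

import Mathlib

open MvPolynomial Matrix
open scoped MatrixOrder

/-- Converse of Lemma 3.1: given a symmetric positive definite Gram matrix `M₁` for `1`
and a symmetric Gram matrix `M₂` for `p` with respect to `z` mod `I`, the polynomials
`z̃ᵢ = Σⱼ (√M₁) i j • z j` are `I`-spherical and `p` mod `I` lies in the subalgebra
generated by their residue classes. -/
theorem spectral_relaxation_converse {n d : ℕ}
    (I : Ideal (MvPolynomial (Fin n) ℝ)) (p : MvPolynomial (Fin n) ℝ)
    (z : Fin d → MvPolynomial (Fin n) ℝ)
    (M₁ M₂ : Matrix (Fin d) (Fin d) ℝ)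
    (hM₁pd : M₁.PosDef) (hM₂sym : M₂ᵀ = M₂)
    (hM₁ : (1 : MvPolynomial (Fin n) ℝ) - ∑ i, ∑ j, M₁ i j • (z i * z j) ∈ I)
    (hM₂ : p - ∑ i, ∑ j, M₂ i j • (z i * z j) ∈ I)
    (zt : Fin d → MvPolynomial (Fin n) ℝ)
    (hzt : ∀ i, zt i = ∑ j, (CFC.sqrt M₁ i j) • z j) :
    ((∑ i, zt i ^ 2) - 1 ∈ I) ∧
    Ideal.Quotient.mk I p ∈
      Algebra.adjoin ℝ (Set.range fun i => Ideal.Quotient.mk I (zt i)) := by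
  set S := CFC.sqrt M₁ with hSdef
  have hSps : S.PosSemidef := Matrix.nonneg_iff_posSemidef.mp (CFC.sqrt_nonneg M₁)
  have hSS : S * S = M₁ := CFC.sqrt_mul_sqrt_self M₁ (Matrix.nonneg_iff_posSemidef.mpr hM₁pd.posSemidef)
  have hsym : ∀ i j, S i j = S j i := by
    intro i j
    have := hSps.1
    rw [Matrix.IsHermitian] at this
    conv_rhs => rw [← this]
    simp [Matrix.conjTranspose_apply]
  -- entrywise identity
  have hentry : ∀ j k, ∑ i, S i j * S i k = M₁ j k := by
    intro j k
    rw [← hSS, Matrix.mul_apply]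
    exact Finset.sum_congr rfl fun i _ => by rw [hsym i j]
  have key : ∑ i, zt i ^ 2 = ∑ i, ∑ j, M₁ i j • (z i * z j) := by
    simp_rw [hzt, sq, Finset.sum_mul_sum, smul_mul_smul_comm]
    rw [Finset.sum_comm]
    refine Finset.sum_congr rfl fun j _ => ?_
    rw [Finset.sum_comm]
    refine Finset.sum_congr rfl fun k _ => ?_
    rw [← Finset.sum_smul, hentry]
  constructor
  · have : (∑ i, zt i ^ 2) - 1 = -((1 : MvPolynomial (Fin n) ℝ)
        - ∑ i, ∑ j, M₁ i j • (z i * z j)) := by rw [key]; ring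
    rw [this]
    exact I.neg_mem hM₁
  · -- invertibility of S
    have hdetM : 0 < M₁.det := hM₁pd.det_pos
    have hdetS : S.det ≠ 0 := by
      intro h
      rw [← hSS, Matrix.det_mul, h, mul_zero] at hdetM
      exact lt_irrefl 0 hdetM
    have hinv : S⁻¹ * S = 1 := Matrix.nonsing_inv_mul S (isUnit_iff_ne_zero.mpr hdetS)
    have hz : ∀ k, z k = ∑ i, S⁻¹ k i • zt i := by
      intro k
      simp_rw [hzt, Finset.smul_sum, smul_smul]
      rw [Finset.sum_comm]
      have : ∀ j, ∑ i, (S⁻¹ k i * S i j) • z j = (1 : Matrix (Fin d) (Fin d) ℝ) k j • z j := by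
        intro j
        rw [← Finset.sum_smul, ← Matrix.mul_apply, hinv]
      simp_rw [this, Matrix.one_apply]
      simp
    set Q : MvPolynomial (Fin n) ℝ →ₐ[ℝ] MvPolynomial (Fin n) ℝ ⧸ I :=
      Ideal.Quotient.mkₐ ℝ I with hQdef
    have hQeq : ∀ q, Ideal.Quotient.mk I q = Q q := fun q => rfl
    set A := Algebra.adjoin ℝ (Set.range fun i => Ideal.Quotient.mk I (zt i)) with hA
    have hztA : ∀ i, Q (zt i) ∈ A := fun i => Algebra.subset_adjoin ⟨i, rfl⟩
    have hzA : ∀ k, Q (z k) ∈ A := by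
      intro k
      rw [hz k]
      rw [map_sum]
      refine Subalgebra.sum_mem A fun i _ => ?_
      rw [_root_.map_smul]
      exact Subalgebra.smul_mem A (hztA i) _
    have hp : Ideal.Quotient.mk I p = Q (∑ i, ∑ j, M₂ i j • (z i * z j)) := by
      exact Ideal.Quotient.eq.mpr hM₂
    rw [hp, map_sum]
    refine Subalgebra.sum_mem A fun i _ => ?_
    rw [map_sum]
    refine Subalgebra.sum_mem A fun j _ => ?_
    rw [_root_.map_smul, _root_.map_mul]
    exact Subalgebra.smul_mem A (Subalgebra.mul_mem A (hzA i) (hzA j)) _
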